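/- Let (x₁, x₂) : I → ℝ² be a differentiable solution, on an interval I, of the system 2π·x₁'(t) = −x₂/(1 − x₁² − x₂²) − x₂·(1 + x₁² + x₂²)/(1 − 2x₁² + 2x₂² + (x₁² + x₂²)²) + 1/(2·x₂) and 2π·x₂'(t) = x₁/(1 − x₁² − x₂²) − x₁·(1 − x₁² − x₂²)/(1 − 2x₁² + 2x₂² + (x₁² + x₂²)²), and assume that for all t ∈ I one has 0 < x₁(t)² + x₂(t)² < 1 and x₂(t) ≠ 0. Writing z(t) := x₁(t) + i·x₂(t), the quantity |1 − z(t)²| / ( (1 − |z(t)|²)·|z(t) − conj(z(t))| ) is constant on I. -/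

import Mathlib

open Complex Real

set_option maxHeartbeats 1000000

lemma key16 (a b : ℝ) (h1 : a ^ 2 + b ^ 2 < 1) (_hb : b ≠ 0) :
    ‖1 - ((a : ℂ) + (b : ℂ) * Complex.I) ^ 2‖ /
        ((1 - ‖(a : ℂ) + (b : ℂ) * Complex.I‖ ^ 2) *
          ‖((a : ℂ) + (b : ℂ) * Complex.I) -
            (starRingEnd ℂ) ((a : ℂ) + (b : ℂ) * Complex.I)‖) =
      Real.sqrt ((1 - 2 * a ^ 2 + 2 * b ^ 2 + (a ^ 2 + b ^ 2) ^ 2) /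
        ((1 - (a ^ 2 + b ^ 2)) ^ 2 * b ^ 2)) / 2 := by
  have hz2 : ‖(a : ℂ) + (b : ℂ) * Complex.I‖ ^ 2 = a ^ 2 + b ^ 2 := by
    rw [Complex.sq_norm, Complex.normSq_apply]
    simp
    ring
  have hzc : ((a : ℂ) + (b : ℂ) * Complex.I) - (starRingEnd ℂ) ((a : ℂ) + (b : ℂ) * Complex.I)
      = (2 * b : ℝ) * Complex.I := by
    simp [Complex.ext_iff]
    ring
  have habs2 : ‖((a : ℂ) + (b : ℂ) * Complex.I) -
      (starRingEnd ℂ) ((a : ℂ) + (b : ℂ) * Complex.I)‖ = 2 * |b| := by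
    rw [hzc]
    simp [abs_mul]
  have hN : ‖1 - ((a : ℂ) + (b : ℂ) * Complex.I) ^ 2‖
      = Real.sqrt (1 - 2 * a ^ 2 + 2 * b ^ 2 + (a ^ 2 + b ^ 2) ^ 2) := by
    rw [Complex.norm_def]
    congr 1
    simp [Complex.normSq_apply, pow_two, Complex.mul_re, Complex.mul_im]
    ring
  have hu : (0:ℝ) ≤ 1 - (a ^ 2 + b ^ 2) := by linarith
  have hNpos : (0:ℝ) ≤ 1 - 2 * a ^ 2 + 2 * b ^ 2 + (a ^ 2 + b ^ 2) ^ 2 := by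
    nlinarith [sq_nonneg (1 - a ^ 2 + b ^ 2), sq_nonneg (a * b)]
  rw [hz2, habs2, hN, Real.sqrt_div hNpos, Real.sqrt_mul (sq_nonneg _), Real.sqrt_sq hu,
    Real.sqrt_sq_eq_abs, div_div]
  congr 1
  ring

lemma const16 (I : Set ℝ) (hI : Convex ℝ I) (x₁ x₂ : ℝ → ℝ)
    (hball : ∀ t ∈ I, 0 < x₁ t ^ 2 + x₂ t ^ 2 ∧ x₁ t ^ 2 + x₂ t ^ 2 < 1)
    (hx₂ : ∀ t ∈ I, x₂ t ≠ 0)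
    (hsol₁ : ∀ t ∈ I, HasDerivWithinAt x₁
      ((-x₂ t / (1 - x₁ t ^ 2 - x₂ t ^ 2) -
          x₂ t * (1 + x₁ t ^ 2 + x₂ t ^ 2) /
            (1 - 2 * x₁ t ^ 2 + 2 * x₂ t ^ 2 + (x₁ t ^ 2 + x₂ t ^ 2) ^ 2) +
          1 / (2 * x₂ t)) / (2 * π)) I t)
    (hsol₂ : ∀ t ∈ I, HasDerivWithinAt x₂
      ((x₁ t / (1 - x₁ t ^ 2 - x₂ t ^ 2) -
          x₁ t * (1 - x₁ t ^ 2 - x₂ t ^ 2) /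
            (1 - 2 * x₁ t ^ 2 + 2 * x₂ t ^ 2 + (x₁ t ^ 2 + x₂ t ^ 2) ^ 2)) / (2 * π)) I t) :
    ∀ s ∈ I, ∀ t ∈ I,
      (1 - 2 * x₁ s ^ 2 + 2 * x₂ s ^ 2 + (x₁ s ^ 2 + x₂ s ^ 2) ^ 2) /
        ((1 - (x₁ s ^ 2 + x₂ s ^ 2)) ^ 2 * x₂ s ^ 2) =
      (1 - 2 * x₁ t ^ 2 + 2 * x₂ t ^ 2 + (x₁ t ^ 2 + x₂ t ^ 2) ^ 2) /
        ((1 - (x₁ t ^ 2 + x₂ t ^ 2)) ^ 2 * x₂ t ^ 2) := by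
  set g : ℝ → ℝ := fun t => (1 - 2 * x₁ t ^ 2 + 2 * x₂ t ^ 2 + (x₁ t ^ 2 + x₂ t ^ 2) ^ 2) /
        ((1 - (x₁ t ^ 2 + x₂ t ^ 2)) ^ 2 * x₂ t ^ 2) with hg_def
  have hg : ∀ t ∈ I, HasDerivWithinAt g 0 I t := by
    intro t ht
    obtain ⟨hpos, hlt⟩ := hball t ht
    have hb := hx₂ t ht
    set a := x₁ t with ha_def
    set b := x₂ t with hb_def
    set v₁ := (-b / (1 - a ^ 2 - b ^ 2) -
          b * (1 + a ^ 2 + b ^ 2) /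
            (1 - 2 * a ^ 2 + 2 * b ^ 2 + (a ^ 2 + b ^ 2) ^ 2) +
          1 / (2 * b)) / (2 * π) with hv₁
    set v₂ := (a / (1 - a ^ 2 - b ^ 2) -
          a * (1 - a ^ 2 - b ^ 2) /
            (1 - 2 * a ^ 2 + 2 * b ^ 2 + (a ^ 2 + b ^ 2) ^ 2)) / (2 * π) with hv₂
    have h1 : HasDerivWithinAt x₁ v₁ I t := hsol₁ t ht
    have h2 : HasDerivWithinAt x₂ v₂ I t := hsol₂ t ht
    have ha2 : HasDerivWithinAt (fun s => x₁ s ^ 2) (2 * a * v₁) I t := by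
      convert (show HasDerivWithinAt (fun s => x₁ s ^ 2) ((2:ℕ) * a ^ (2 - 1) * v₁) I t from h1.fun_pow 2) using 1; push_cast; ring
    have hb2 : HasDerivWithinAt (fun s => x₂ s ^ 2) (2 * b * v₂) I t := by
      convert (show HasDerivWithinAt (fun s => x₂ s ^ 2) ((2:ℕ) * b ^ (2 - 1) * v₂) I t from h2.fun_pow 2) using 1; push_cast; ring
    have hu : HasDerivWithinAt (fun s => x₁ s ^ 2 + x₂ s ^ 2)
        (2 * a * v₁ + 2 * b * v₂) I t := ha2.add hb2
    have hn : HasDerivWithinAt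
        (fun s => 1 - 2 * x₁ s ^ 2 + 2 * x₂ s ^ 2 + (x₁ s ^ 2 + x₂ s ^ 2) ^ 2)
        (0 - 2 * (2 * a * v₁) + 2 * (2 * b * v₂) +
          2 * (a ^ 2 + b ^ 2) * (2 * a * v₁ + 2 * b * v₂)) I t := by
      refine HasDerivWithinAt.add (HasDerivWithinAt.add
        (HasDerivWithinAt.sub (hasDerivWithinAt_const t I 1) (ha2.const_mul 2))
        (hb2.const_mul 2)) ?_
      refine HasDerivWithinAt.congr_deriv (show HasDerivWithinAt (fun s => (x₁ s ^ 2 + x₂ s ^ 2) ^ 2)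
        ((2:ℕ) * (a ^ 2 + b ^ 2) ^ (2 - 1) * (2 * a * v₁ + 2 * b * v₂)) I t from hu.fun_pow 2) ?_; push_cast; ring
    have hd : HasDerivWithinAt
        (fun s => (1 - (x₁ s ^ 2 + x₂ s ^ 2)) ^ 2 * x₂ s ^ 2)
        ((2 * (1 - (a ^ 2 + b ^ 2)) * (0 - (2 * a * v₁ + 2 * b * v₂))) * b ^ 2 +
          (1 - (a ^ 2 + b ^ 2)) ^ 2 * (2 * b * v₂)) I t := by
      refine HasDerivWithinAt.mul ?_ hb2
      refine HasDerivWithinAt.congr_deriv (show HasDerivWithinAt (fun s => (1 - (x₁ s ^ 2 + x₂ s ^ 2)) ^ 2)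
        ((2:ℕ) * (1 - (a ^ 2 + b ^ 2)) ^ (2 - 1) * (0 - (2 * a * v₁ + 2 * b * v₂))) I t from
        ((hasDerivWithinAt_const t I (1:ℝ)).sub hu).fun_pow 2) ?_
      push_cast; ring
    have hdne : (1 - (a ^ 2 + b ^ 2)) ^ 2 * b ^ 2 ≠ 0 := by
      apply mul_ne_zero (pow_ne_zero _ (by nlinarith)) (pow_ne_zero _ hb)
    have hdiv := hn.div hd hdne
    have hzero : ((0 - 2 * (2 * a * v₁) + 2 * (2 * b * v₂) +
          2 * (a ^ 2 + b ^ 2) * (2 * a * v₁ + 2 * b * v₂)) *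
          ((1 - (a ^ 2 + b ^ 2)) ^ 2 * b ^ 2) -
        (1 - 2 * a ^ 2 + 2 * b ^ 2 + (a ^ 2 + b ^ 2) ^ 2) *
          ((2 * (1 - (a ^ 2 + b ^ 2)) * (0 - (2 * a * v₁ + 2 * b * v₂))) * b ^ 2 +
            (1 - (a ^ 2 + b ^ 2)) ^ 2 * (2 * b * v₂))) /
        ((1 - (a ^ 2 + b ^ 2)) ^ 2 * b ^ 2) ^ 2 = 0 := by
      have hden1 : (1 : ℝ) - a ^ 2 - b ^ 2 ≠ 0 := by nlinarith
      have hden2 : (1 : ℝ) - 2 * a ^ 2 + 2 * b ^ 2 + (a ^ 2 + b ^ 2) ^ 2 ≠ 0 := by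
        nlinarith [sq_nonneg (1 - a ^ 2 + b ^ 2), sq_nonneg (a * b)]
      have hpi : (π : ℝ) ≠ 0 := Real.pi_ne_zero
      rw [div_eq_zero_iff]
      left
      rw [hv₁, hv₂]
      field_simp
      ring
    exact hzero ▸ hdiv
  intro s hs t ht
  have hbound := hI.norm_image_sub_le_of_norm_hasDerivWithin_le
    (f' := fun _ => (0:ℝ)) (C := 0) hg (fun x hx => by simp) hs ht
  have h1 : ‖g t - g s‖ ≤ 0 := by simpa using hbound
  have h2 : g t = g s :=
    norm_sub_eq_zero_iff.mp (le_antisymm h1 (norm_nonneg _))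
  exact h2.symm

/-- For the reduced system of two opposite point vortices `z₁ = conj(z₂) = x₁ + i x₂` in the
unit disc, the quantity `|1 − z²| / ((1 − |z|²)·|z − z̄|)` is constant along solutions. -/
theorem stmt16 (I : Set ℝ) (hI : Convex ℝ I) (x₁ x₂ : ℝ → ℝ)
    (hball : ∀ t ∈ I, 0 < x₁ t ^ 2 + x₂ t ^ 2 ∧ x₁ t ^ 2 + x₂ t ^ 2 < 1)
    (hx₂ : ∀ t ∈ I, x₂ t ≠ 0)
    (hsol₁ : ∀ t ∈ I, HasDerivWithinAt x₁
      ((-x₂ t / (1 - x₁ t ^ 2 - x₂ t ^ 2) -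
          x₂ t * (1 + x₁ t ^ 2 + x₂ t ^ 2) /
            (1 - 2 * x₁ t ^ 2 + 2 * x₂ t ^ 2 + (x₁ t ^ 2 + x₂ t ^ 2) ^ 2) +
          1 / (2 * x₂ t)) / (2 * π)) I t)
    (hsol₂ : ∀ t ∈ I, HasDerivWithinAt x₂
      ((x₁ t / (1 - x₁ t ^ 2 - x₂ t ^ 2) -
          x₁ t * (1 - x₁ t ^ 2 - x₂ t ^ 2) /
            (1 - 2 * x₁ t ^ 2 + 2 * x₂ t ^ 2 + (x₁ t ^ 2 + x₂ t ^ 2) ^ 2)) / (2 * π)) I t) :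
    ∀ s ∈ I, ∀ t ∈ I,
      ‖1 - ((x₁ s : ℂ) + (x₂ s : ℂ) * Complex.I) ^ 2‖ /
          ((1 - ‖(x₁ s : ℂ) + (x₂ s : ℂ) * Complex.I‖ ^ 2) *
            ‖((x₁ s : ℂ) + (x₂ s : ℂ) * Complex.I) -
              (starRingEnd ℂ) ((x₁ s : ℂ) + (x₂ s : ℂ) * Complex.I)‖) =
        ‖1 - ((x₁ t : ℂ) + (x₂ t : ℂ) * Complex.I) ^ 2‖ /
          ((1 - ‖(x₁ t : ℂ) + (x₂ t : ℂ) * Complex.I‖ ^ 2) *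
            ‖((x₁ t : ℂ) + (x₂ t : ℂ) * Complex.I) -
              (starRingEnd ℂ) ((x₁ t : ℂ) + (x₂ t : ℂ) * Complex.I)‖) := by
  intro s hs t ht
  rw [key16 (x₁ s) (x₂ s) (hball s hs).2 (hx₂ s hs),
    key16 (x₁ t) (x₂ t) (hball t ht).2 (hx₂ t ht),
    const16 I hI x₁ x₂ hball hx₂ hsol₁ hsol₂ s hs t ht]
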